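/- Let S be a common independent set of matroids M1, M2 and suppose shortest augmenting paths in G(S) have length 4. Let Π be a maximal augmenting set in G(S). Then there is no augmenting path of length at most 4 in the exchange graph G(S ⊕ Π), where S ⊕ Π = S + B1 − A1 + B2. -/

import Mathlib

open Set

variable {α : Type*}

/-- Vertices of the exchange graph: `Sum.inl v` is an element of the ground set,
`Sum.inr false` is the source `s`, `Sum.inr true` is the sink `t`. -/
abbrev ExV (α : Type*) := α ⊕ Bool

/-- Adjacency in the exchange graph `G(S)` of the common independent set `S`. -/
def exAdj (M₁ M₂ : Matroid α) (S : Set α) : ExV α → ExV α → Prop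
  | Sum.inl u, Sum.inl v =>
      (u ∈ S ∧ v ∉ S ∧ M₁.Indep (insert v (S \ {u}))) ∨
      (u ∉ S ∧ v ∈ S ∧ M₂.Indep (insert u (S \ {v})))
  | Sum.inr false, Sum.inl v => v ∉ S ∧ M₁.Indep (insert v S)
  | Sum.inl v, Sum.inr true => v ∉ S ∧ M₂.Indep (insert v S)
  | _, _ => False

/-- `l` is an `(s,t)`-path (list of vertices) in the exchange graph `G(S)`.
Its length (number of edges) is `l.length - 1`. -/
def IsSTPath (M₁ M₂ : Matroid α) (S : Set α) (l : List (ExV α)) : Prop :=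
  l.Chain' (exAdj M₁ M₂ S) ∧ l.head? = some (Sum.inr false) ∧
    l.getLast? = some (Sum.inr true)

/-- `l` is a path from `s` to the element `v` in the exchange graph `G(S)`. -/
def IsSPathTo (M₁ M₂ : Matroid α) (S : Set α) (v : α) (l : List (ExV α)) : Prop :=
  l.Chain' (exAdj M₁ M₂ S) ∧ l.head? = some (Sum.inr false) ∧
    l.getLast? = some (Sum.inl v)

/-- `v` is at distance exactly `i` from `s` in the exchange graph `G(S)`;
i.e. `v ∈ D_i`. -/
def InLayer (M₁ M₂ : Matroid α) (S : Set α) (i : ℕ) (v : α) : Prop :=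
  (∃ l, IsSPathTo M₁ M₂ S v l ∧ l.length = i + 1) ∧
    ∀ l, IsSPathTo M₁ M₂ S v l → i + 1 ≤ l.length

/-- Shortest `(s,t)`-paths in `G(S)` have length exactly `4`. -/
def ShortestAugLenFour (M₁ M₂ : Matroid α) (S : Set α) : Prop :=
  (∃ l, IsSTPath M₁ M₂ S l ∧ l.length = 5) ∧
    ∀ l, IsSTPath M₁ M₂ S l → 5 ≤ l.length

/-- `(B₁, A₁, B₂)` is an augmenting set in `G(S)`. -/
def IsAugSet (M₁ M₂ : Matroid α) (S B₁ A₁ B₂ : Set α) : Prop :=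
  (∀ v ∈ B₁, InLayer M₁ M₂ S 1 v) ∧ (∀ v ∈ A₁, InLayer M₁ M₂ S 2 v) ∧
  (∀ v ∈ B₂, InLayer M₁ M₂ S 3 v) ∧
  B₁.ncard = A₁.ncard ∧ A₁.ncard = B₂.ncard ∧
  M₁.Indep (S ∪ B₁) ∧ M₂.Indep ((S ∪ B₁) \ A₁) ∧
  M₁.Indep ((S \ A₁) ∪ B₂) ∧ M₂.Indep (S ∪ B₂)

/-! ### Auxiliary lemmas -/

section Aux

variable {M₁ M₂ : Matroid α} {S : Set α} {v : α} {l : List (ExV α)}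

private lemma aug_augment' {M : Matroid α} {I J : Set α} (hI : M.Indep I) (hJ : M.Indep J)
    (hIfin : I.Finite) (hJfin : J.Finite) (h : I.ncard < J.ncard) :
    ∃ e ∈ J \ I, M.Indep (insert e I) := by
  refine hI.augment hJ ?_
  rw [← hIfin.cast_ncard_eq, ← hJfin.cast_ncard_eq]
  exact_mod_cast h

private lemma aug_len_ge2 (h : IsSPathTo M₁ M₂ S v l) : 2 ≤ l.length := by
  obtain ⟨hc, hh, hg⟩ := h
  match l with
  | [] => simp at hh
  | [a] => simp_all
  | a :: b :: l => simp

private lemma aug_path_len3 (hvS : v ∈ S) (h : IsSPathTo M₁ M₂ S v l) : 3 ≤ l.length := by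
  obtain ⟨hc, hh, hg⟩ := h
  match l with
  | [] => simp at hh
  | [a] => simp_all
  | [a, b] =>
    exfalso
    simp at hh hg; subst hh; subst hg
    simp [List.Chain', List.isChain_cons_cons, exAdj] at hc
    exact hc.1 hvS
  | a :: b :: c :: l => simp

private lemma aug_path_len4 (hvS : v ∉ S) (hdep : ¬ M₁.Indep (insert v S))
    (h : IsSPathTo M₁ M₂ S v l) : 4 ≤ l.length := by
  obtain ⟨hc, hh, hg⟩ := h
  match l with
  | [] => simp at hh
  | [a] => simp_all
  | [a, b] =>
    exfalso
    simp at hh hg; subst hh; subst hg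
    simp [List.Chain', List.isChain_cons_cons, exAdj] at hc
    exact hdep hc.2
  | [a, b, c] =>
    exfalso
    simp at hh hg; subst hh; subst hg
    simp only [List.Chain', List.isChain_cons_cons, List.isChain_singleton, and_true] at hc
    obtain ⟨h1, h2⟩ := hc
    match b with
    | Sum.inr true => simp [exAdj] at h2
    | Sum.inr false => simp [exAdj] at h1
    | Sum.inl u =>
      simp only [exAdj] at h1 h2
      rcases h2 with ⟨huS, -⟩ | ⟨-, hvS', -⟩
      · exact h1.1 huS
      · exact hvS hvS'
  | a :: b :: c :: d :: l => simp

private lemma aug_layer1_spec (hv : InLayer M₁ M₂ S 1 v) : v ∉ S ∧ M₁.Indep (insert v S) := by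
  obtain ⟨⟨l, ⟨hc, hh, hg⟩, hlen⟩, -⟩ := hv
  match l, hlen with
  | [a, b], _ =>
    simp at hh hg; subst hh; subst hg
    simpa [List.Chain', List.isChain_cons_cons, exAdj] using hc

private lemma aug_layer1_intro (h1 : v ∉ S) (h2 : M₁.Indep (insert v S)) :
    InLayer M₁ M₂ S 1 v := by
  constructor
  · exact ⟨[Sum.inr false, Sum.inl v],
      ⟨by simp [List.Chain', List.isChain_cons_cons, exAdj, h1, h2], by simp, by simp⟩, rfl⟩
  · exact fun l hl => aug_len_ge2 hl

private lemma aug_layer2_spec (hv : InLayer M₁ M₂ S 2 v) :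
    v ∈ S ∧ ∃ u, u ∉ S ∧ M₁.Indep (insert u S) ∧ M₂.Indep (insert u (S \ {v})) := by
  obtain ⟨⟨l, ⟨hc, hh, hg⟩, hlen⟩, -⟩ := hv
  match l, hlen with
  | [a, b, c], _ =>
    simp at hh hg; subst hh; subst hg
    simp only [List.Chain', List.isChain_cons_cons, List.isChain_singleton, and_true] at hc
    obtain ⟨h1, h2⟩ := hc
    match b with
    | Sum.inr true => simp [exAdj] at h2
    | Sum.inr false => simp [exAdj] at h1
    | Sum.inl u =>
      simp only [exAdj] at h1 h2
      rcases h2 with ⟨huS, -, -⟩ | ⟨huS, hvS, hind⟩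
      · exact absurd huS h1.1
      · exact ⟨hvS, u, h1.1, h1.2, hind⟩

private lemma aug_layer2_intro {u : α} (hvS : v ∈ S) (hu : u ∉ S)
    (hu1 : M₁.Indep (insert u S)) (hu2 : M₂.Indep (insert u (S \ {v}))) :
    InLayer M₁ M₂ S 2 v := by
  constructor
  · refine ⟨[Sum.inr false, Sum.inl u, Sum.inl v], ⟨?_, by simp, by simp⟩, rfl⟩
    simp only [List.Chain', List.isChain_cons_cons, List.isChain_singleton, and_true]
    exact ⟨⟨hu, hu1⟩, Or.inr ⟨hu, hvS, hu2⟩⟩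
  · exact fun l hl => aug_path_len3 hvS hl

private lemma aug_layer3_spec (hv : InLayer M₁ M₂ S 3 v) :
    v ∉ S ∧ ¬ M₁.Indep (insert v S) := by
  obtain ⟨⟨l, ⟨hc, hh, hg⟩, hlen⟩, hmin⟩ := hv
  have hvS : v ∉ S := by
    match l, hlen with
    | [a, b, c, d], _ =>
      simp at hh hg; subst hh; subst hg
      simp only [List.Chain', List.isChain_cons_cons, List.isChain_singleton, and_true] at hc
      obtain ⟨h1, h2, h3⟩ := hc
      match b with
      | Sum.inr true => simp [exAdj] at h2
      | Sum.inr false => simp [exAdj] at h1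
      | Sum.inl u =>
        match c with
        | Sum.inr true => simp [exAdj] at h3
        | Sum.inr false => simp [exAdj] at h2
        | Sum.inl w =>
          simp only [exAdj] at h1 h2 h3
          rcases h2 with ⟨huS, -, -⟩ | ⟨-, hwS, -⟩
          · exact absurd huS h1.1
          · rcases h3 with ⟨-, hvS, -⟩ | ⟨hwS', -, -⟩
            · exact hvS
            · exact absurd hwS hwS'
  refine ⟨hvS, fun hind => ?_⟩
  have := hmin [Sum.inr false, Sum.inl v]
    ⟨by simp [List.Chain', List.isChain_cons_cons, exAdj, hvS, hind], by simp, by simp⟩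
  simp at this

private lemma aug_layer3_intro {u w : α} (hvS : v ∉ S) (hdep : ¬ M₁.Indep (insert v S))
    (hu : u ∉ S) (hw : w ∈ S) (hu1 : M₁.Indep (insert u S))
    (huw : M₂.Indep (insert u (S \ {w}))) (hwv : M₁.Indep (insert v (S \ {w}))) :
    InLayer M₁ M₂ S 3 v := by
  constructor
  · refine ⟨[Sum.inr false, Sum.inl u, Sum.inl w, Sum.inl v], ⟨?_, by simp, by simp⟩, rfl⟩
    simp only [List.Chain', List.isChain_cons_cons, List.isChain_singleton, and_true]
    exact ⟨⟨hu, hu1⟩, Or.inr ⟨hu, hw, huw⟩, Or.inl ⟨hw, hvS, hwv⟩⟩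
  · exact fun l hl => aug_path_len4 hvS hdep hl

private lemma aug_layer13 (h1 : InLayer M₁ M₂ S 1 v) (h3 : InLayer M₁ M₂ S 3 v) : False := by
  obtain ⟨⟨l, hl, hlen⟩, -⟩ := h1
  have := h3.2 l hl
  omega

private lemma aug_no_two_path (hlen : ShortestAugLenFour M₁ M₂ S) (h1 : v ∉ S)
    (h2 : M₁.Indep (insert v S)) (h3 : M₂.Indep (insert v S)) : False := by
  have := hlen.2 [Sum.inr false, Sum.inl v, Sum.inr true]
    ⟨by simp [List.Chain', List.isChain_cons_cons, exAdj, h1, h2, h3], by simp, by simp⟩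
  simp at this

end Aux

set_option maxHeartbeats 4000000 in
/-- If `Π = (B₁, A₁, B₂)` is a maximal augmenting set in `G(S)` (where shortest
augmenting paths have length `4`), then `G(S ⊕ Π)` has no augmenting path of
length at most `4`. -/
theorem maximal_augset_no_short_path {α : Type*} (M₁ M₂ : Matroid α)
    (hE : M₂.E = M₁.E) (hfin : M₁.E.Finite)
    (S : Set α) (hS₁ : M₁.Indep S) (hS₂ : M₂.Indep S)
    (hlen : ShortestAugLenFour M₁ M₂ S)
    (B₁ A₁ B₂ : Set α) (haug : IsAugSet M₁ M₂ S B₁ A₁ B₂)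
    (hmax : ∀ B₁' A₁' B₂', IsAugSet M₁ M₂ S B₁' A₁' B₂' →
      B₁ ⊆ B₁' → A₁ ⊆ A₁' → B₂ ⊆ B₂' → B₁' = B₁ ∧ A₁' = A₁ ∧ B₂' = B₂) :
    ∀ l : List (ExV α), IsSTPath M₁ M₂ ((S ∪ B₁ ∪ B₂) \ A₁) l → 6 ≤ l.length := by
  obtain ⟨hL1, hL2, hL3, hk1, hk2, hI1, hI2, hI3, hI4⟩ := haug
  -- basic membership facts
  have hA₁S : A₁ ⊆ S := fun v hv => (aug_layer2_spec (hL2 v hv)).1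
  have hB₁S : ∀ v ∈ B₁, v ∉ S := fun v hv => (aug_layer1_spec (hL1 v hv)).1
  have hB₂S : ∀ v ∈ B₂, v ∉ S := fun v hv => (aug_layer3_spec (hL3 v hv)).1
  have hB₁B₂ : ∀ v ∈ B₁, v ∉ B₂ := fun v hv hv2 => aug_layer13 (hL1 v hv) (hL3 v hv2)
  have hB₁ind : ∀ v ∈ B₁, M₁.Indep (insert v S) := fun v hv => (aug_layer1_spec (hL1 v hv)).2
  have hB₂dep : ∀ v ∈ B₂, ¬ M₁.Indep (insert v S) := fun v hv => (aug_layer3_spec (hL3 v hv)).2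
  -- finiteness
  have hSfin : S.Finite := hfin.subset hS₁.subset_ground
  have hB₁fin : B₁.Finite := hfin.subset fun v hv => hI1.subset_ground (Or.inr hv)
  have hB₂fin : B₂.Finite := (hE ▸ hfin).subset fun v hv => hI4.subset_ground (Or.inr hv)
  have hA₁fin : A₁.Finite := hSfin.subset hA₁S
  -- disjointness
  have dSB₁ : Disjoint S B₁ := Set.disjoint_right.mpr hB₁S
  have dSB₂ : Disjoint S B₂ := Set.disjoint_right.mpr hB₂S
  have dB₁B₂ : Disjoint B₁ B₂ := Set.disjoint_left.mpr hB₁B₂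
  have dSAB₁ : Disjoint (S \ A₁) B₁ := dSB₁.mono_left diff_subset
  have dSAB₂ : Disjoint (S \ A₁) B₂ := dSB₂.mono_left diff_subset
  set Sp := (S ∪ B₁ ∪ B₂) \ A₁ with hSpdef
  have hSpmem : ∀ z, z ∈ Sp ↔ (z ∈ S ∧ z ∉ A₁) ∨ z ∈ B₁ ∨ z ∈ B₂ := by
    intro z
    simp only [hSpdef, Set.mem_diff, Set.mem_union]
    constructor
    · rintro ⟨(hz | hz) | hz, hz2⟩
      · exact Or.inl ⟨hz, hz2⟩
      · exact Or.inr (Or.inl hz)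
      · exact Or.inr (Or.inr hz)
    · rintro (⟨hz, hz2⟩ | hz | hz)
      · exact ⟨Or.inl (Or.inl hz), hz2⟩
      · exact ⟨Or.inl (Or.inr hz), fun ha => hB₁S z hz (hA₁S ha)⟩
      · exact ⟨Or.inr hz, fun ha => hB₂S z hz (hA₁S ha)⟩
  have hSpeq : Sp = ((S \ A₁) ∪ B₁) ∪ B₂ := by
    ext z
    rw [hSpmem z]
    simp only [Set.mem_union, Set.mem_diff]
    tauto
  have hSpfin : Sp.Finite := ((hSfin.union hB₁fin).union hB₂fin).subset diff_subset
  -- cardinalities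
  have e1 : (S ∪ B₁).ncard = S.ncard + B₁.ncard := Set.ncard_union_eq dSB₁ hSfin hB₁fin
  have e2 : (S ∪ B₂).ncard = S.ncard + B₂.ncard := Set.ncard_union_eq dSB₂ hSfin hB₂fin
  have e4 : S.ncard = (S \ A₁).ncard + A₁.ncard := by
    nth_rewrite 1 [← Set.diff_union_of_subset hA₁S]
    exact Set.ncard_union_eq Set.disjoint_sdiff_left (hSfin.diff) hA₁fin
  have e3 : Sp.ncard = (S \ A₁).ncard + B₁.ncard + B₂.ncard := by
    rw [hSpeq, Set.ncard_union_eq (Set.disjoint_union_left.mpr ⟨dSAB₂, dB₁B₂⟩)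
      ((hSfin.diff).union hB₁fin) hB₂fin,
      Set.ncard_union_eq dSAB₁ (hSfin.diff) hB₁fin]
  -- CASE A : a single interior vertex
  have caseA : ∀ x, x ∉ Sp → M₁.Indep (insert x Sp) → M₂.Indep (insert x Sp) → False := by
    intro x hxSp hx1 hx2
    have hxfin : (insert x Sp).Finite := hSpfin.insert x
    have hcx : (insert x Sp).ncard = Sp.ncard + 1 := Set.ncard_insert_of_notMem hxSp hSpfin
    obtain ⟨e, he, hei⟩ := aug_augment' hI1 hx1 (hSfin.union hB₁fin) hxfin (by omega)
    obtain ⟨he1, he2⟩ := he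
    have hx_or : e = x ∨ e ∈ B₂ := by
      rcases Set.mem_insert_iff.mp he1 with rfl | heSp
      · exact Or.inl rfl
      · rw [hSpmem e] at heSp
        rcases heSp with ⟨heS, -⟩ | heB₁ | heB₂
        · exact absurd (Or.inl heS) he2
        · exact absurd (Or.inr heB₁) he2
        · exact Or.inr heB₂
    rcases hx_or with heq | heB₂
    · subst heq
      have hxS : e ∉ S := fun h => he2 (Or.inl h)
      have hxind₁ : M₁.Indep (insert e S) :=
        hei.subset (insert_subset_insert subset_union_left)
      obtain ⟨f, hf, hfi⟩ := aug_augment' hI4 hx2 (hSfin.union hB₂fin) hxfin (by omega)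
      obtain ⟨hf1, hf2⟩ := hf
      have hf_or : f = e ∨ f ∈ B₁ := by
        rcases Set.mem_insert_iff.mp hf1 with rfl | hfSp
        · exact Or.inl rfl
        · rw [hSpmem f] at hfSp
          rcases hfSp with ⟨hfS, -⟩ | hfB₁ | hfB₂
          · exact absurd (Or.inl hfS) hf2
          · exact Or.inr hfB₁
          · exact absurd (Or.inr hfB₂) hf2
      rcases hf_or with heqf | hfB₁
      · subst heqf
        exact aug_no_two_path hlen hxS hxind₁
          (hfi.subset (insert_subset_insert subset_union_left))
      · exact aug_no_two_path hlen (hB₁S f hfB₁) (hB₁ind f hfB₁)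
          (hfi.subset (insert_subset_insert subset_union_left))
    · exact hB₂dep e heB₂ (hei.subset (insert_subset_insert subset_union_left))
  -- CASE B : three interior vertices
  have caseB : ∀ y₁ y₂ y₃, y₁ ∉ Sp → y₂ ∈ Sp → y₃ ∉ Sp →
      M₁.Indep (insert y₁ Sp) → M₂.Indep (insert y₁ (Sp \ {y₂})) →
      M₁.Indep (insert y₃ (Sp \ {y₂})) → M₂.Indep (insert y₃ Sp) → False := by
    intro y₁ y₂ y₃ hy₁Sp hy₂Sp hy₃Sp hc1 hc2 hc3 hc4
    have hcy₁ : (insert y₁ Sp).ncard = Sp.ncard + 1 := Set.ncard_insert_of_notMem hy₁Sp hSpfin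
    have hcy₃ : (insert y₃ Sp).ncard = Sp.ncard + 1 := Set.ncard_insert_of_notMem hy₃Sp hSpfin
    -- Step 1 : y₁ ∉ S ∪ B₁ and M₁.Indep (insert y₁ (S ∪ B₁))
    obtain ⟨e, he, hei⟩ :=
      aug_augment' hI1 hc1 (hSfin.union hB₁fin) (hSpfin.insert _) (by omega)
    obtain ⟨he1, he2⟩ := he
    have he_or : e = y₁ ∨ e ∈ B₂ := by
      rcases Set.mem_insert_iff.mp he1 with rfl | heSp
      · exact Or.inl rfl
      · rw [hSpmem e] at heSp
        rcases heSp with ⟨heS, -⟩ | heB₁ | heB₂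
        · exact absurd (Or.inl heS) he2
        · exact absurd (Or.inr heB₁) he2
        · exact Or.inr heB₂
    rcases he_or with heq | heB₂
    swap
    · exact hB₂dep e heB₂ (hei.subset (insert_subset_insert subset_union_left))
    subst heq
    have hy₁SB₁ : e ∉ S ∪ B₁ := he2
    have hR1 : M₁.Indep (insert e (S ∪ B₁)) := hei
    have hy₁S : e ∉ S := fun h => hy₁SB₁ (Or.inl h)
    have hy₁S' : M₁.Indep (insert e S) := hR1.subset (insert_subset_insert subset_union_left)
    -- Step 2 : y₃ ∉ S ∪ B₂ and M₂.Indep (insert y₃ (S ∪ B₂))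
    obtain ⟨f, hf, hfi⟩ :=
      aug_augment' hI4 hc4 (hSfin.union hB₂fin) (hSpfin.insert _) (by omega)
    obtain ⟨hf1, hf2⟩ := hf
    have hf_or : f = y₃ ∨ f ∈ B₁ := by
      rcases Set.mem_insert_iff.mp hf1 with rfl | hfSp
      · exact Or.inl rfl
      · rw [hSpmem f] at hfSp
        rcases hfSp with ⟨hfS, -⟩ | hfB₁ | hfB₂
        · exact absurd (Or.inl hfS) hf2
        · exact Or.inr hfB₁
        · exact absurd (Or.inr hfB₂) hf2
    rcases hf_or with heqf | hfB₁
    swap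
    · exact aug_no_two_path hlen (hB₁S f hfB₁) (hB₁ind f hfB₁)
        (hfi.subset (insert_subset_insert subset_union_left))
    subst heqf
    have hy₃SB₂ : f ∉ S ∪ B₂ := hf2
    have hR2 : M₂.Indep (insert f (S ∪ B₂)) := hfi
    have hy₃S : f ∉ S := fun h => hy₃SB₂ (Or.inl h)
    have hy₃S₂ : M₂.Indep (insert f S) := hR2.subset (insert_subset_insert subset_union_left)
    have hR2' : ¬ M₁.Indep (insert f S) := fun h => aug_no_two_path hlen hy₃S h hy₃S₂
    -- V and U are dependent
    have hy₁VS : e ∉ (S \ A₁) ∪ B₁ := by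
      rintro (h | h)
      · exact hy₁S h.1
      · exact hy₁SB₁ (Or.inr h)
    have hy₃US : f ∉ (S \ A₁) ∪ B₂ := by
      rintro (h | h)
      · exact hy₃S h.1
      · exact hy₃SB₂ (Or.inr h)
    have hVcard : (insert e ((S \ A₁) ∪ B₁)).ncard = (S \ A₁).ncard + B₁.ncard + 1 := by
      rw [Set.ncard_insert_of_notMem hy₁VS ((hSfin.diff).union hB₁fin),
        Set.ncard_union_eq dSAB₁ (hSfin.diff) hB₁fin]
    have hUcard : (insert f ((S \ A₁) ∪ B₂)).ncard = (S \ A₁).ncard + B₂.ncard + 1 := by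
      rw [Set.ncard_insert_of_notMem hy₃US ((hSfin.diff).union hB₂fin),
        Set.ncard_union_eq dSAB₂ (hSfin.diff) hB₂fin]
    have hVdep : ¬ M₂.Indep (insert e ((S \ A₁) ∪ B₁)) := by
      intro hind
      obtain ⟨g, hg', hgi⟩ := aug_augment' hS₂ hind hSfin
        (((hSfin.diff).union hB₁fin).insert _) (by omega)
      obtain ⟨hg1, hg2⟩ := hg'
      rcases Set.mem_insert_iff.mp hg1 with rfl | hgVS
      · exact aug_no_two_path hlen hy₁S hy₁S' hgi
      · rcases hgVS with h | h
        · exact hg2 h.1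
        · exact aug_no_two_path hlen (hB₁S g h) (hB₁ind g h) hgi
    have hUdep : ¬ M₁.Indep (insert f ((S \ A₁) ∪ B₂)) := by
      intro hind
      obtain ⟨g, hg', hgi⟩ := aug_augment' hS₁ hind hSfin
        (((hSfin.diff).union hB₂fin).insert _) (by omega)
      obtain ⟨hg1, hg2⟩ := hg'
      rcases Set.mem_insert_iff.mp hg1 with rfl | hgUS
      · exact hR2' hgi
      · rcases hgUS with h | h
        · exact hg2 h.1
        · exact hB₂dep g h hgi
    -- locate y₂
    have hy₂V : y₂ ∈ (S \ A₁) ∪ B₁ := by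
      by_contra hy₂V
      refine hVdep (hc2.subset ?_)
      intro z hz
      rcases Set.mem_insert_iff.mp hz with rfl | hz'
      · exact Set.mem_insert _ _
      · refine Set.mem_insert_of_mem _ ⟨?_, fun hzz => hy₂V (hzz ▸ hz')⟩
        rw [hSpmem z]
        rcases hz' with h | h
        · exact Or.inl ⟨h.1, h.2⟩
        · exact Or.inr (Or.inl h)
    have hy₂U : y₂ ∈ (S \ A₁) ∪ B₂ := by
      by_contra hy₂U
      refine hUdep (hc3.subset ?_)
      intro z hz
      rcases Set.mem_insert_iff.mp hz with rfl | hz'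
      · exact Set.mem_insert _ _
      · refine Set.mem_insert_of_mem _ ⟨?_, fun hzz => hy₂U (hzz ▸ hz')⟩
        rw [hSpmem z]
        rcases hz' with h | h
        · exact Or.inl ⟨h.1, h.2⟩
        · exact Or.inr (Or.inr h)
    have hy₂SA : y₂ ∈ S \ A₁ := by
      rcases hy₂V with h | h
      · exact h
      · rcases hy₂U with h' | h'
        · exact absurd h'.1 (hB₁S y₂ h)
        · exact absurd h' (hB₁B₂ y₂ h)
    have hy₂S : y₂ ∈ S := hy₂SA.1
    have hy₂A : y₂ ∉ A₁ := hy₂SA.2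
    -- the two key independent sets
    have hQ2 : M₂.Indep ((insert e ((S \ A₁) ∪ B₁)) \ {y₂}) := by
      refine hc2.subset ?_
      rintro z ⟨hz, hzy⟩
      rcases Set.mem_insert_iff.mp hz with rfl | hz'
      · exact Set.mem_insert _ _
      · refine Set.mem_insert_of_mem _ ⟨?_, hzy⟩
        rw [hSpmem z]
        rcases hz' with h | h
        · exact Or.inl ⟨h.1, h.2⟩
        · exact Or.inr (Or.inl h)
    have hQ3 : M₁.Indep ((insert f ((S \ A₁) ∪ B₂)) \ {y₂}) := by
      refine hc3.subset ?_
      rintro z ⟨hz, hzy⟩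
      rcases Set.mem_insert_iff.mp hz with rfl | hz'
      · exact Set.mem_insert _ _
      · refine Set.mem_insert_of_mem _ ⟨?_, hzy⟩
        rw [hSpmem z]
        rcases hz' with h | h
        · exact Or.inl ⟨h.1, h.2⟩
        · exact Or.inr (Or.inr h)
    -- y₂ is in layer 2
    have hy₂Vmem : y₂ ∈ insert e ((S \ A₁) ∪ B₁) := Set.mem_insert_of_mem _ hy₂V
    have hcS2 : (S \ {y₂}).ncard + 1 = S.ncard := Set.ncard_diff_singleton_add_one hy₂S hSfin
    have hcV2 : ((insert e ((S \ A₁) ∪ B₁)) \ {y₂}).ncard + 1 =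
        (insert e ((S \ A₁) ∪ B₁)).ncard :=
      Set.ncard_diff_singleton_add_one hy₂Vmem (((hSfin.diff).union hB₁fin).insert _)
    obtain ⟨u₂, hu₂, hu₂i⟩ := aug_augment' (show M₂.Indep (S \ {y₂}) from hS₂.subset diff_subset) hQ2 (hSfin.diff)
      ((((hSfin.diff).union hB₁fin).insert _).diff) (by omega)
    obtain ⟨hu₂1, hu₂2⟩ := hu₂
    have hu₂y₂ : u₂ ≠ y₂ := fun h => hu₂1.2 h
    have hu₂S : u₂ ∉ S := fun h => hu₂2 ⟨h, hu₂y₂⟩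
    have hu₂1' : M₁.Indep (insert u₂ S) := by
      rcases Set.mem_insert_iff.mp hu₂1.1 with rfl | h
      · exact hy₁S'
      · rcases h with h | h
        · exact absurd h.1 hu₂S
        · exact hB₁ind u₂ h
    have hy₂L2 : InLayer M₁ M₂ S 2 y₂ := aug_layer2_intro hy₂S hu₂S hu₂1' hu₂i
    -- y₃ is in layer 3
    have hI₉ : M₁.Indep (insert f ((S \ A₁) \ {y₂})) := by
      refine hQ3.subset ?_
      rintro z hz
      rcases Set.mem_insert_iff.mp hz with rfl | hz'
      · exact ⟨Set.mem_insert _ _, fun h => hy₃S (h ▸ hy₂S)⟩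
      · exact ⟨Set.mem_insert_of_mem _ (Or.inl hz'.1), hz'.2⟩

    have hy₃E : f ∈ M₁.E := hc3.subset_ground (Set.mem_insert _ _)
    have hIy₃Ssub : insert f ((S \ A₁) \ {y₂}) ⊆ insert f S :=
      insert_subset_insert (fun z hz => hz.1.1)
    have hy₃SE : insert f S ⊆ M₁.E := insert_subset hy₃E hS₁.subset_ground
    obtain ⟨K, hK, hIK⟩ := hI₉.subset_isBasis_of_subset hIy₃Ssub hy₃SE
    have hKfin : K.Finite := (hSfin.insert f).subset hK.subset
    have hKcard : S.ncard ≤ K.ncard := by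
      by_contra hcon
      push_neg at hcon
      obtain ⟨e', he', hei'⟩ := aug_augment' hK.indep hS₁ hKfin hSfin hcon
      exact (hK.insert_dep ⟨Set.mem_insert_of_mem _ he'.1, he'.2⟩).not_indep hei'
    have hy₃K : f ∈ K := hIK (Set.mem_insert _ _)
    have hwex : ∃ w ∈ S, w ∉ K := by
      by_contra hcon
      push_neg at hcon
      have hKeq : K = insert f S := Subset.antisymm hK.subset (insert_subset hy₃K hcon)
      exact hR2' (hKeq ▸ hK.indep)
    obtain ⟨w, hwS, hwK⟩ := hwex
    have hcfS : (insert f S).ncard = S.ncard + 1 := Set.ncard_insert_of_notMem hy₃S hSfin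
    have hSwK : S \ {w} ⊆ K := by
      intro z hz
      by_contra hzK
      have hzw : z ≠ w := hz.2
      have hsub : K ⊆ (insert f S) \ {w, z} := by
        intro t ht
        refine ⟨hK.subset ht, ?_⟩
        intro hmem
        simp only [Set.mem_insert_iff, Set.mem_singleton_iff] at hmem
        rcases hmem with rfl | rfl
        · exact hwK ht
        · exact hzK ht
      have hwzsub : ({w, z} : Set α) ⊆ insert f S := by
        rintro t hmem
        simp only [Set.mem_insert_iff, Set.mem_singleton_iff] at hmem
        rcases hmem with rfl | rfl
        · exact Set.mem_insert_of_mem _ hwS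
        · exact Set.mem_insert_of_mem _ hz.1
      have hdiffcard : ((insert f S) \ ({w, z} : Set α)).ncard =
          (insert f S).ncard - ({w, z} : Set α).ncard :=
        Set.ncard_diff hwzsub (Set.toFinite _)
      have hpair : ({w, z} : Set α).ncard = 2 := Set.ncard_pair (Ne.symm hzw)
      have hKle : K.ncard ≤ ((insert f S) \ ({w, z} : Set α)).ncard :=
        Set.ncard_le_ncard hsub ((hSfin.insert f).diff)
      have hSpos : 0 < S.ncard := Set.ncard_pos hSfin |>.mpr ⟨w, hwS⟩
      omega
    have hwA : w ∈ A₁ ∨ w = y₂ := by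
      by_contra hcon
      push_neg at hcon
      exact hwK (hIK (Set.mem_insert_of_mem _ ⟨⟨hwS, hcon.1⟩, hcon.2⟩))
    have hwL2 : InLayer M₁ M₂ S 2 w := by
      rcases hwA with h | rfl
      · exact hL2 w h
      · exact hy₂L2
    obtain ⟨-, u₃, hu₃S, hu₃1, hu₃2⟩ := aug_layer2_spec hwL2
    have hwv : M₁.Indep (insert f (S \ {w})) :=
      hK.indep.subset (insert_subset hy₃K fun z hz => hSwK hz)
    have hy₃L3 : InLayer M₁ M₂ S 3 f := aug_layer3_intro hy₃S hR2' hu₃S hwS hu₃1 hu₃2 hwv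
    have hy₁L1 : InLayer M₁ M₂ S 1 e := aug_layer1_intro hy₁S hy₁S'
    -- assemble the bigger augmenting set
    have hy₁B₁ : e ∉ B₁ := fun h => hy₁SB₁ (Or.inr h)
    have hy₃B₂ : f ∉ B₂ := fun h => hy₃SB₂ (Or.inr h)
    have haug' : IsAugSet M₁ M₂ S (insert e B₁) (insert y₂ A₁) (insert f B₂) := by
      refine ⟨?_, ?_, ?_, ?_, ?_, ?_, ?_, ?_, ?_⟩
      · rintro v hv
        rcases Set.mem_insert_iff.mp hv with rfl | hv'
        · exact hy₁L1
        · exact hL1 v hv'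
      · rintro v hv
        rcases Set.mem_insert_iff.mp hv with rfl | hv'
        · exact hy₂L2
        · exact hL2 v hv'
      · rintro v hv
        rcases Set.mem_insert_iff.mp hv with rfl | hv'
        · exact hy₃L3
        · exact hL3 v hv'
      · rw [Set.ncard_insert_of_notMem hy₁B₁ hB₁fin,
          Set.ncard_insert_of_notMem hy₂A hA₁fin, hk1]
      · rw [Set.ncard_insert_of_notMem hy₂A hA₁fin,
          Set.ncard_insert_of_notMem hy₃B₂ hB₂fin, hk2]
      · rw [Set.union_insert]
        exact hR1
      · refine hc2.subset ?_
        rintro z ⟨hz1, hz2⟩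
        have hzy₂ : z ≠ y₂ := fun h => hz2 (h ▸ Set.mem_insert _ _)
        have hzA₁ : z ∉ A₁ := fun h => hz2 (Set.mem_insert_of_mem _ h)
        rcases hz1 with hzS | hzB
        · exact Set.mem_insert_of_mem _ ⟨(hSpmem z).mpr (Or.inl ⟨hzS, hzA₁⟩), hzy₂⟩
        · rcases Set.mem_insert_iff.mp hzB with rfl | hzB₁
          · exact Set.mem_insert _ _
          · exact Set.mem_insert_of_mem _
              ⟨(hSpmem z).mpr (Or.inr (Or.inl hzB₁)), hzy₂⟩
      · refine hc3.subset ?_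
        rintro z hz
        rcases hz with ⟨hzS, hz2⟩ | hzB
        · have hzy₂ : z ≠ y₂ := fun h => hz2 (h ▸ Set.mem_insert _ _)
          have hzA₁ : z ∉ A₁ := fun h => hz2 (Set.mem_insert_of_mem _ h)
          exact Set.mem_insert_of_mem _ ⟨(hSpmem z).mpr (Or.inl ⟨hzS, hzA₁⟩), hzy₂⟩
        · rcases Set.mem_insert_iff.mp hzB with rfl | hzB₂
          · exact Set.mem_insert _ _
          · have hzy₂ : z ≠ y₂ := fun h => hB₂S z hzB₂ (h ▸ hy₂S)
            exact Set.mem_insert_of_mem _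
              ⟨(hSpmem z).mpr (Or.inr (Or.inr hzB₂)), hzy₂⟩
      · rw [Set.union_insert]
        exact hR2
    obtain ⟨hB₁eq, -, -⟩ := hmax _ _ _ haug'
      (Set.subset_insert _ _) (Set.subset_insert _ _) (Set.subset_insert _ _)
    exact hy₁B₁ (hB₁eq ▸ Set.mem_insert _ _)
  -- Now destructure the path
  intro l hl
  obtain ⟨hc, hh, hg⟩ := hl
  match l, hc, hh, hg with
  | [], _, hh, _ => simp at hh
  | [a], _, hh, hg => simp at hh hg; subst hh; simp at hg
  | [a, b], hc, hh, hg =>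
    exfalso
    simp at hh hg; subst hh; subst hg
    simp [List.Chain', List.isChain_cons_cons, exAdj] at hc
  | [a, b, c], hc, hh, hg =>
    exfalso
    simp at hh hg; subst hh; subst hg
    simp only [List.Chain', List.isChain_cons_cons, List.isChain_singleton, and_true] at hc
    obtain ⟨h1, h2⟩ := hc
    match b with
    | Sum.inr true => simp [exAdj] at h1
    | Sum.inr false => simp [exAdj] at h1
    | Sum.inl x =>
      simp only [exAdj] at h1 h2
      exact caseA x h1.1 h1.2 h2.2
  | [a, b, c, d], hc, hh, hg =>
    exfalso
    simp at hh hg; subst hh; subst hg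
    simp only [List.Chain', List.isChain_cons_cons, List.isChain_singleton, and_true] at hc
    obtain ⟨h1, h2, h3⟩ := hc
    match b with
    | Sum.inr true => simp [exAdj] at h1
    | Sum.inr false => simp [exAdj] at h1
    | Sum.inl y₁ =>
      match c with
      | Sum.inr true => simp [exAdj] at h3
      | Sum.inr false => simp [exAdj] at h2
      | Sum.inl y₂ =>
        simp only [exAdj] at h1 h2 h3
        rcases h2 with ⟨hy₁Sp, -, -⟩ | ⟨-, hy₂Sp, -⟩
        · exact h1.1 hy₁Sp
        · exact h3.1 hy₂Sp
  | [a, b, c, d, e], hc, hh, hg =>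
    exfalso
    simp at hh hg; subst hh; subst hg
    simp only [List.Chain', List.isChain_cons_cons, List.isChain_singleton, and_true] at hc
    obtain ⟨h1, h2, h3, h4⟩ := hc
    match b with
    | Sum.inr true => simp [exAdj] at h1
    | Sum.inr false => simp [exAdj] at h1
    | Sum.inl y₁ =>
      match c with
      | Sum.inr true => simp [exAdj] at h3
      | Sum.inr false => simp [exAdj] at h2
      | Sum.inl y₂ =>
        match d with
        | Sum.inr true => simp [exAdj] at h4
        | Sum.inr false => simp [exAdj] at h3
        | Sum.inl y₃ =>
          simp only [exAdj] at h1 h2 h3 h4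
          rcases h2 with ⟨hy₁Sp, -, -⟩ | ⟨-, hy₂Sp, hc2⟩
          · exact h1.1 hy₁Sp
          · rcases h3 with ⟨-, hy₃Sp, hc3⟩ | ⟨hy₂Sp', -, -⟩
            · exact caseB y₁ y₂ y₃ h1.1 hy₂Sp hy₃Sp h1.2 hc2 hc3 h4.2
            · exact hy₂Sp' hy₂Sp
  | a :: b :: c :: d :: e :: f :: l, _, _, _ => simp
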